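/- Let d ≥ 1 and u, v ∈ ℝᵈ with uᵢ ≠ 0 and vᵢ ≠ 0 for all i. Let M be the real 2d × 2d symmetric matrix with blocks M(inl i, inl j) = δᵢⱼ vᵢ², M(inr i, inr j) = δᵢⱼ uᵢ², M(inl i, inr j) = M(inr i, inl j) = δᵢⱼ uᵢ vᵢ. Define c ∈ ℝ^{2d} by c(inl i) = √(|uᵢ|/|vᵢ|) and c(inr i) = √(|vᵢ|/|uᵢ|), and let M̃ have entries M̃_{ab} = M_{ab} c_a c_b. Then (1/2) · sup { ⟨z, M̃ z⟩ / ‖z‖₂² : z ∈ ℝ^{2d}, z ≠ 0 } = max_{1 ≤ i ≤ d} |uᵢ vᵢ| = ‖u ⊙ v‖_∞; that is, half the largest eigenvalue of the rescaled Hessian equals the ℓ_∞ norm of the predictor β = u ⊙ v. -/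

import Mathlib

private lemma dlnq (d : ℕ) (u v : Fin d → ℝ)
    (hu : ∀ i, u i ≠ 0) (hv : ∀ i, v i ≠ 0) (z : (Fin d ⊕ Fin d) → ℝ) :
    (∑ a, z a *
              ((Matrix.of fun a' b : Fin d ⊕ Fin d =>
                Matrix.fromBlocks
                    (Matrix.diagonal fun i => v i ^ 2)
                    (Matrix.diagonal fun i => u i * v i)
                    (Matrix.diagonal fun i => u i * v i)
                    (Matrix.diagonal fun i => u i ^ 2) a' b
                  * Sum.elim (fun i => Real.sqrt (|u i| / |v i|))
                      (fun i => Real.sqrt (|v i| / |u i|)) a'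
                  * Sum.elim (fun i => Real.sqrt (|u i| / |v i|))
                      (fun i => Real.sqrt (|v i| / |u i|)) b).mulVec z a))
    = ∑ i, (|u i * v i| * z (Sum.inl i) ^ 2 + 2 * (u i * v i) * z (Sum.inl i) * z (Sum.inr i)
        + |u i * v i| * z (Sum.inr i) ^ 2) := by
  have key1 : ∀ i : Fin d, v i ^ 2 * Real.sqrt (|u i| / |v i|) * Real.sqrt (|u i| / |v i|)
      = |u i * v i| := by
    intro i
    rw [mul_assoc, Real.mul_self_sqrt (div_nonneg (abs_nonneg _) (abs_nonneg _)), abs_mul,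
      ← sq_abs (v i)]
    field_simp [abs_ne_zero.2 (hv i)]
  have key2 : ∀ i : Fin d, u i ^ 2 * Real.sqrt (|v i| / |u i|) * Real.sqrt (|v i| / |u i|)
      = |u i * v i| := by
    intro i
    rw [mul_assoc, Real.mul_self_sqrt (div_nonneg (abs_nonneg _) (abs_nonneg _)), abs_mul,
      ← sq_abs (u i)]
    field_simp [abs_ne_zero.2 (hu i)]
  have key3 : ∀ i : Fin d, Real.sqrt (|u i| / |v i|) * Real.sqrt (|v i| / |u i|) = 1 := by
    intro i
    rw [← Real.sqrt_mul (div_nonneg (abs_nonneg _) (abs_nonneg _))]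
    rw [show |u i| / |v i| * (|v i| / |u i|) = 1 by
      field_simp [abs_ne_zero.2 (hu i), abs_ne_zero.2 (hv i)]]
    exact Real.sqrt_one
  simp only [Matrix.mulVec, dotProduct, Matrix.of_apply, Fintype.sum_sum_type,
    Matrix.fromBlocks_apply₁₁, Matrix.fromBlocks_apply₁₂, Matrix.fromBlocks_apply₂₁,
    Matrix.fromBlocks_apply₂₂, Matrix.diagonal_apply, ite_mul, zero_mul, mul_ite, mul_zero,
    Sum.elim_inl, Sum.elim_inr, Finset.sum_ite_eq, Finset.mem_univ, if_true]
  rw [← Finset.sum_add_distrib]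
  refine Finset.sum_congr rfl fun i _ => ?_
  have h1 := key1 i
  have h2 := key2 i
  have h3 := key3 i
  linear_combination z (Sum.inl i) ^ 2 * h1 + z (Sum.inr i) ^ 2 * h2 +
    2 * (u i * v i) * z (Sum.inl i) * z (Sum.inr i) * h3

/-- With elementwise scaling `c(inl i) = √(|uᵢ|/|vᵢ|)`, `c(inr i) = √(|vᵢ|/|uᵢ|)`, half the
largest eigenvalue (sup of the Rayleigh quotient) of the rescaled Hessian `M̃ = M ⊙ ccᵀ`
of the diagonal linear network equals `‖u ⊙ v‖_∞ = max_i |uᵢ vᵢ|`. -/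
theorem diagonal_linear_network_worst_adaptive_sharpness_linf
    (d : ℕ) (hd : 1 ≤ d) (u v : Fin d → ℝ)
    (hu : ∀ i, u i ≠ 0) (hv : ∀ i, v i ≠ 0) :
    (1 / 2 : ℝ) * sSup {r : ℝ | ∃ z : (Fin d ⊕ Fin d) → ℝ, z ≠ 0 ∧
        r = (∑ a, z a *
              ((Matrix.of fun a' b : Fin d ⊕ Fin d =>
                Matrix.fromBlocks
                    (Matrix.diagonal fun i => v i ^ 2)
                    (Matrix.diagonal fun i => u i * v i)
                    (Matrix.diagonal fun i => u i * v i)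
                    (Matrix.diagonal fun i => u i ^ 2) a' b
                  * Sum.elim (fun i => Real.sqrt (|u i| / |v i|))
                      (fun i => Real.sqrt (|v i| / |u i|)) a'
                  * Sum.elim (fun i => Real.sqrt (|u i| / |v i|))
                      (fun i => Real.sqrt (|v i| / |u i|)) b).mulVec z a))
            / ∑ a, z a ^ 2}
    = ⨆ i : Fin d, |u i * v i| := by
  haveI : NeZero d := ⟨by omega⟩
  obtain ⟨i₀, hmax⟩ := Finite.exists_max (fun i : Fin d => |u i * v i|)
  set b := |u i₀ * v i₀| with hbdef
  have hbpos : 0 < b := abs_pos.2 (mul_ne_zero (hu i₀) (hv i₀))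
  have hB : (⨆ i : Fin d, |u i * v i|) = b :=
    le_antisymm (ciSup_le hmax) (le_ciSup (f := fun i : Fin d => |u i * v i|)
      (Set.Finite.bddAbove (Set.finite_range _)) i₀)
  set S := {r : ℝ | ∃ z : (Fin d ⊕ Fin d) → ℝ, z ≠ 0 ∧
        r = (∑ a, z a *
              ((Matrix.of fun a' b : Fin d ⊕ Fin d =>
                Matrix.fromBlocks
                    (Matrix.diagonal fun i => v i ^ 2)
                    (Matrix.diagonal fun i => u i * v i)
                    (Matrix.diagonal fun i => u i * v i)
                    (Matrix.diagonal fun i => u i ^ 2) a' b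
                  * Sum.elim (fun i => Real.sqrt (|u i| / |v i|))
                      (fun i => Real.sqrt (|v i| / |u i|)) a'
                  * Sum.elim (fun i => Real.sqrt (|u i| / |v i|))
                      (fun i => Real.sqrt (|v i| / |u i|)) b).mulVec z a))
            / ∑ a, z a ^ 2} with hSdef
  have hub : ∀ r ∈ S, r ≤ 2 * b := by
    rintro r ⟨z, hz, rfl⟩
    rw [dlnq d u v hu hv z]
    have hN : (0 : ℝ) < ∑ a, z a ^ 2 := by
      obtain ⟨a, ha⟩ := Function.ne_iff.mp hz
      exact Finset.sum_pos' (fun a _ => sq_nonneg _)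
        ⟨a, Finset.mem_univ a, lt_of_le_of_ne (sq_nonneg _) (Ne.symm (pow_ne_zero 2 ha))⟩
    rw [div_le_iff₀ hN]
    have hzsum : (∑ a, z a ^ 2) = ∑ i, (z (Sum.inl i) ^ 2 + z (Sum.inr i) ^ 2) := by
      rw [Fintype.sum_sum_type, ← Finset.sum_add_distrib]
    rw [hzsum, Finset.mul_sum]
    refine Finset.sum_le_sum fun i _ => ?_
    have h1 : |u i * v i| ≤ b := hmax i
    have h2 : u i * v i ≤ |u i * v i| := le_abs_self _
    have h3 : -|u i * v i| ≤ u i * v i := neg_abs_le _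
    nlinarith [sq_nonneg (z (Sum.inl i) + z (Sum.inr i)),
      sq_nonneg (z (Sum.inl i) - z (Sum.inr i)), sq_nonneg (z (Sum.inl i)),
      sq_nonneg (z (Sum.inr i)), abs_nonneg (u i * v i)]
  have hmem : 2 * b ∈ S := by
    set s : ℝ := if 0 ≤ u i₀ * v i₀ then 1 else -1 with hs
    refine ⟨Sum.elim (fun j => if j = i₀ then 1 else 0) (fun j => if j = i₀ then s else 0),
      fun h => ?_, ?_⟩
    · have := congrFun h (Sum.inl i₀)
      simp at this
    · rw [dlnq d u v hu hv]
      have hsq : s ^ 2 = 1 := by rcases le_or_gt 0 (u i₀ * v i₀) with h | h <;> simp [hs, h]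
      have huvs : u i₀ * v i₀ * s = b := by
        rcases le_or_gt 0 (u i₀ * v i₀) with h | h <;>
          simp [hs, h, hbdef, abs_of_nonneg, abs_of_neg, h]
      have hnum : (∑ i, (|u i * v i| *
            (Sum.elim (fun j => if j = i₀ then (1 : ℝ) else 0)
              (fun j => if j = i₀ then s else 0) (Sum.inl i)) ^ 2
          + 2 * (u i * v i) *
            Sum.elim (fun j => if j = i₀ then (1 : ℝ) else 0)
              (fun j => if j = i₀ then s else 0) (Sum.inl i) *
            Sum.elim (fun j => if j = i₀ then (1 : ℝ) else 0)
              (fun j => if j = i₀ then s else 0) (Sum.inr i)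
          + |u i * v i| *
            (Sum.elim (fun j => if j = i₀ then (1 : ℝ) else 0)
              (fun j => if j = i₀ then s else 0) (Sum.inr i)) ^ 2)) = 4 * b := by
        rw [Finset.sum_eq_single i₀]
        · simp only [Sum.elim_inl, Sum.elim_inr, eq_self_iff_true, if_true, ite_true, one_pow,
            mul_one]
          linear_combination |u i₀ * v i₀| * hsq + 2 * huvs
        · intro j _ hj
          simp [hj]
        · intro h; exact absurd (Finset.mem_univ i₀) h
      have hden : (∑ a, (Sum.elim (fun j => if j = i₀ then (1 : ℝ) else 0)
          (fun j => if j = i₀ then s else 0)) a ^ 2) = 2 := by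
        rw [Fintype.sum_sum_type]
        simp only [Sum.elim_inl, Sum.elim_inr]
        rw [Finset.sum_eq_single i₀ (fun j _ hj => by simp [hj])
            (fun h => absurd (Finset.mem_univ i₀) h),
          Finset.sum_eq_single i₀ (fun j _ hj => by simp [hj])
            (fun h => absurd (Finset.mem_univ i₀) h),
          if_pos rfl, if_pos rfl, one_pow, hsq]
        norm_num
      rw [hnum, hden]
      ring
  have hsup : sSup S = 2 * b := le_antisymm (csSup_le ⟨2 * b, hmem⟩ hub)
    (le_csSup ⟨2 * b, hub⟩ hmem)
  rw [hsup, hB]; ring
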